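/- A transaction does not change its concurrency relationship with respect to others after reordering: let ρ be a reordering of a finite set T of transactions (with pairwise distinct commit timestamps, each either committed or pending with respect to M). Then for all t, u ∈ T, t and u are concurrent with respect to the original commit timestamps if and only if t and u are concurrent with respect to the new commit timestamps assigned by ρ. -/

import Mathlib

/-- A timestamp is a pair `(m, p)` of naturals, ordered lexicographically. -/
abbrev Timestamp : Type := ℕ ×ₗ ℕ

/-- A transaction: a start timestamp of the form `(m, 0)`, a commit timestamp
`(M, q)` with `q ≥ 1` and `start ≤ (M, 0)`, a finite read set of key/version
pairs with versions at most the start timestamp, and a finite write set of keys. -/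
structure Txn (Key : Type) where
  startTS : Timestamp
  commitTS : Timestamp
  start_snd : (ofLex startTS).2 = 0
  commit_pos : 1 ≤ (ofLex commitTS).2
  start_le : startTS ≤ toLex ((ofLex commitTS).1, 0)
  reads : Finset (Key × Timestamp)
  writes : Finset Key
  reads_snapshot : ∀ kv ∈ reads, kv.2 ≤ startTS

/-- Concurrency of two transactions with respect to a commit-timestamp assignment `C`. -/
def ConcurrentWith {Key : Type} (C : Txn Key → Timestamp) (t1 t2 : Txn Key) : Prop :=
  (C t1 < C t2 → t2.startTS < C t1) ∧ (C t2 < C t1 → t1.startTS < C t2)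

/-- Concurrency with respect to the original commit timestamps. -/
def Concurrent {Key : Type} (t1 t2 : Txn Key) : Prop :=
  ConcurrentWith (fun t => t.commitTS) t1 t2

/-- Write-write dependency `t1 →ww t2` w.r.t. commit assignment `C`. -/
def wwC {Key : Type} (C : Txn Key → Timestamp) (t1 t2 : Txn Key) : Prop :=
  t1 ≠ t2 ∧ (∃ k, k ∈ t1.writes ∧ k ∈ t2.writes) ∧ C t1 < C t2

/-- Write-read dependency `t1 →wr t2` w.r.t. commit assignment `C`. -/
def wrC {Key : Type} (C : Txn Key → Timestamp) (t1 t2 : Txn Key) : Prop :=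
  t1 ≠ t2 ∧ ∃ kv ∈ t2.reads, kv.1 ∈ t1.writes ∧ kv.2 = C t1

/-- Read-write dependency `t1 →rw t2` w.r.t. commit assignment `C`. -/
def rwC {Key : Type} (C : Txn Key → Timestamp) (t1 t2 : Txn Key) : Prop :=
  t1 ≠ t2 ∧ ∃ kv ∈ t1.reads, kv.1 ∈ t2.writes ∧ kv.2 < C t2

/-- The dependency relation: union of ww, wr and rw. -/
def depC {Key : Type} (C : Txn Key → Timestamp) (t1 t2 : Txn Key) : Prop :=
  wwC C t1 t2 ∨ wrC C t1 t2 ∨ rwC C t1 t2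

/-- `t` is committed with respect to the next block number `M`. -/
def Committed {Key : Type} (M : ℕ) (t : Txn Key) : Prop :=
  (ofLex t.commitTS).1 < M

/-- `t` is pending with respect to the next block number `M`:
its commit timestamp is `(M, p)` (with `p ≥ 1` automatic). -/
def Pending {Key : Type} (M : ℕ) (t : Txn Key) : Prop :=
  (ofLex t.commitTS).1 = M

/-- A reordering of the transactions in `T`: it assigns to each pending
transaction a new commit timestamp `(M, p')` with `p' ≥ 1`, injectively on `T`,
leaving committed transactions' commit timestamps (and, implicitly, all start
timestamps, read sets and write sets) unchanged. -/
structure Reordering {Key : Type} (M : ℕ) (T : Finset (Txn Key)) where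
  newCommit : Txn Key → Timestamp
  fix_committed : ∀ t ∈ T, Committed M t → newCommit t = t.commitTS
  pending_block : ∀ t ∈ T, Pending M t → (ofLex (newCommit t)).1 = M
  pending_pos : ∀ t ∈ T, Pending M t → 1 ≤ (ofLex (newCommit t)).2
  inj : ∀ t ∈ T, ∀ u ∈ T, newCommit t = newCommit u → t = u

/-- a transaction does not change its concurrency relationship
with respect to others after reordering: for a reordering `ρ` of a finite set
`T` of transactions with pairwise distinct commit timestamps (each committed or
pending w.r.t. `M`), any `t, u ∈ T` are concurrent with respect to the original
commit timestamps iff they are concurrent with respect to the new ones. -/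

lemma ts_lt_of_fst_lt {a b : Timestamp} (h : (ofLex a).1 < (ofLex b).1) : a < b :=
  Prod.Lex.lt_iff.mpr (Or.inl h)

lemma ts_lt_of_fst_eq {a b : Timestamp} (h1 : (ofLex a).1 = (ofLex b).1)
    (h2 : (ofLex a).2 < (ofLex b).2) : a < b :=
  Prod.Lex.lt_iff.mpr (Or.inr ⟨h1, h2⟩)

lemma start_lt_of_block {Key : Type} (M : ℕ) (t : Txn Key)
    (hcp : Committed M t ∨ Pending M t) (c : Timestamp)
    (h1 : (ofLex c).1 = M) (h2 : 1 ≤ (ofLex c).2) :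
    t.startTS < c := by
  refine lt_of_le_of_lt t.start_le ?_
  rcases hcp with h | h
  · exact ts_lt_of_fst_lt (by simpa [h1, Committed] using h)
  · exact ts_lt_of_fst_eq (by simpa [h1, Pending] using h) (by show 0 < (ofLex c).2; omega)

theorem reorder_preserves_concurrency {Key : Type} (M : ℕ) (T : Finset (Txn Key))
    (hdist : ∀ t ∈ T, ∀ u ∈ T, t.commitTS = u.commitTS → t = u)
    (hcp : ∀ t ∈ T, Committed M t ∨ Pending M t)
    (ρ : Reordering M T) :
    ∀ t ∈ T, ∀ u ∈ T,
      (ConcurrentWith (fun x => x.commitTS) t u ↔ ConcurrentWith ρ.newCommit t u) := by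
  intro t ht u hu
  have hcpt := hcp t ht
  have hcpu := hcp u hu
  have hkey : ∀ v ∈ T, Pending M v → ∀ w ∈ T,
      w.startTS < v.commitTS ∧ w.startTS < ρ.newCommit v := by
    intro v hv hpv w hw
    constructor
    · exact start_lt_of_block M w (hcp w hw) _ hpv v.commit_pos
    · exact start_lt_of_block M w (hcp w hw) _ (ρ.pending_block v hv hpv)
        (ρ.pending_pos v hv hpv)
  have hcplt : ∀ v ∈ T, Committed M v → ∀ w ∈ T, Pending M w →
      v.commitTS < w.commitTS ∧ ρ.newCommit v < ρ.newCommit w := by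
    intro v hv hcv w hw hpw
    constructor
    · exact ts_lt_of_fst_lt (by rw [hpw]; exact hcv)
    · refine ts_lt_of_fst_lt ?_
      rw [ρ.fix_committed v hv hcv, ρ.pending_block w hw hpw]
      exact hcv
  rcases hcpt with hct | hpt
  · rcases hcpu with hcu | hpu
    · unfold ConcurrentWith
      rw [ρ.fix_committed t ht hct, ρ.fix_committed u hu hcu]
    · -- t committed, u pending
      obtain ⟨h1, h2⟩ := hcplt t ht hct u hu hpu
      constructor
      · rintro ⟨a, b⟩
        refine ⟨fun _ => ?_, fun h => absurd h (not_lt.mpr h2.le)⟩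
        rw [ρ.fix_committed t ht hct]
        exact a h1
      · rintro ⟨a, b⟩
        refine ⟨fun _ => ?_, fun h => absurd h (not_lt.mpr h1.le)⟩
        have := a h2
        rwa [ρ.fix_committed t ht hct] at this
  · rcases hcpu with hcu | hpu
    · -- t pending, u committed
      obtain ⟨h1, h2⟩ := hcplt u hu hcu t ht hpt
      constructor
      · rintro ⟨a, b⟩
        refine ⟨fun h => absurd h (not_lt.mpr h2.le), fun _ => ?_⟩
        rw [ρ.fix_committed u hu hcu]
        exact b h1
      · rintro ⟨a, b⟩
        refine ⟨fun h => absurd h (not_lt.mpr h1.le), fun _ => ?_⟩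
        have := b h2
        rwa [ρ.fix_committed u hu hcu] at this
    · -- both pending: all conclusions automatic
      constructor
      · intro _
        exact ⟨fun _ => (hkey t ht hpt u hu).2, fun _ => (hkey u hu hpu t ht).2⟩
      · intro _
        exact ⟨fun _ => (hkey t ht hpt u hu).1, fun _ => (hkey u hu hpu t ht).1⟩
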